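/- In the 1d Gaussian NCE setting, gradient descent with step size η = o(1) cannot jump over the annulus: if ||τ − τ*|| ≥ 0.2R and τ' = τ − η∇L(τ), then ||τ' − τ*|| > 0.15R (for R sufficiently large). -/

import Mathlib

open MeasureTheory

/-- Noise density `q = N(0,1)`. -/
noncomputable def qpdf (x : ℝ) : ℝ :=
  (1 / Real.sqrt (2 * Real.pi)) * Real.exp (-x ^ 2 / 2)

/-- Data density `p* = N(R,1)`. -/
noncomputable def ppdf (R x : ℝ) : ℝ :=
  (1 / Real.sqrt (2 * Real.pi)) * Real.exp (-(x - R) ^ 2 / 2)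

/-- Model density `p(x) = exp(−x²/2 + bx − c)` for parameter `τ = [b,c]`. -/
noncomputable def pmodel (b c x : ℝ) : ℝ :=
  Real.exp (-x ^ 2 / 2 + b * x - c)

/-- The gradient of the NCE loss, `∇L(τ) = (1/2) ∫ (p−p*)/(p/q + 1) T(x) dx` with
`T(x) = [x, −1]`. -/
noncomputable def gradNCE (R b c : ℝ) (i : Fin 2) : ℝ :=
  (1 / 2) * ∫ x : ℝ, ((pmodel b c x - ppdf R x) / (pmodel b c x / qpdf x + 1)) *
    ![x, (-1 : ℝ)] i

/-- Second coordinate of the optimum `τ* = [R, R²/2 + log √(2π)]`. -/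
noncomputable def cstar (R : ℝ) : ℝ := R ^ 2 / 2 + Real.log (Real.sqrt (2 * Real.pi))

lemma sqrt_triangle (a d u v : ℝ) :
    Real.sqrt (a^2+d^2) - Real.sqrt (u^2+v^2) ≤ Real.sqrt ((a-u)^2+(d-v)^2) := by
  have h := norm_sub_norm_le (⟨a,d⟩ : ℂ) (⟨u,v⟩ : ℂ)
  simpa [Complex.norm_def, Complex.normSq_apply, Complex.normSq_mk, Complex.sub_re,
    Complex.sub_im, sq] using h

lemma key1 (x : ℝ) : (|x|+1) * Real.exp (-x^2/2) ≤ 3 * Real.exp (-(1/4)*x^2) := by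
  have h1 : Real.exp (-x^2/2) = Real.exp (-(1/4)*x^2) * Real.exp (-(1/4)*x^2) := by
    rw [← Real.exp_add]; ring_nf
  have hp := Real.exp_pos (-(1/4)*x^2)
  have h2 : (|x|+1) * Real.exp (-(1/4)*x^2) ≤ 3 := by
    have hmul : Real.exp ((1/4)*x^2) * Real.exp (-(1/4)*x^2) = 1 := by
      rw [← Real.exp_add]; simp
    have h := Real.add_one_le_exp ((1/4)*x^2)
    have habs : |x| + 1 ≤ 3 * Real.exp ((1/4)*x^2) := by
      nlinarith [abs_nonneg x, sq_abs x, sq_nonneg (|x| - 1)]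
    nlinarith [Real.exp_pos ((1/4)*x^2)]
  calc (|x|+1) * Real.exp (-x^2/2)
      = ((|x|+1) * Real.exp (-(1/4)*x^2)) * Real.exp (-(1/4)*x^2) := by rw [h1]; ring
    _ ≤ 3 * Real.exp (-(1/4)*x^2) := mul_le_mul_of_nonneg_right h2 hp.le

lemma qpdf_pos (x : ℝ) : 0 < qpdf x := by
  unfold qpdf
  have : 0 < Real.sqrt (2 * Real.pi) := Real.sqrt_pos.2 (by positivity)
  positivity

lemma ppdf_pos (R x : ℝ) : 0 < ppdf R x := by
  unfold ppdf
  have : 0 < Real.sqrt (2 * Real.pi) := Real.sqrt_pos.2 (by positivity)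
  positivity

lemma core_bound (R b c x : ℝ) :
    |(pmodel b c x - ppdf R x) / (pmodel b c x / qpdf x + 1)| ≤ qpdf x + ppdf R x := by
  have hq := qpdf_pos x
  have hps := ppdf_pos R x
  have hp : 0 < pmodel b c x := Real.exp_pos _
  set p := pmodel b c x
  set q := qpdf x
  set ps := ppdf R x
  have hD : (0:ℝ) < p / q + 1 := by positivity
  have hD1 : (1:ℝ) ≤ p / q + 1 := by
    have : 0 < p / q := by positivity
    linarith
  have h1 : |p - ps| ≤ p + ps := by
    rw [abs_sub_le_iff]; constructor <;> linarith
  have h2 : |p - ps| / (p / q + 1) ≤ (p + ps) / (p / q + 1) := by gcongr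
  have h3 : p / (p / q + 1) ≤ q := by
    rw [div_le_iff₀ hD]
    have hq' : q * (p / q + 1) = p + q := by field_simp
    rw [hq']
    linarith
  have h4 : ps / (p / q + 1) ≤ ps := div_le_self hps.le hD1
  have h5 : (p + ps) / (p / q + 1) = p / (p / q + 1) + ps / (p / q + 1) := add_div _ _ _
  calc |(p - ps) / (p / q + 1)| = |p - ps| / (p / q + 1) := by
        rw [abs_div, abs_of_pos hD]
    _ ≤ (p + ps) / (p / q + 1) := h2
    _ ≤ q + ps := by rw [h5]; linarith

lemma dens_bound (R x : ℝ) (hR : 0 ≤ R) :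
    (qpdf x + ppdf R x) * (|x| + 1) ≤
      3 / Real.sqrt (2*Real.pi) * (Real.exp (-(1/4)*x^2) + Real.exp (-(1/4)*(x-R)^2))
        + R / Real.sqrt (2*Real.pi) * Real.exp (-(1/2)*(x-R)^2) := by
  have hs : 0 < Real.sqrt (2 * Real.pi) := Real.sqrt_pos.2 (by positivity)
  have hq : qpdf x * (|x| + 1) ≤ 3 / Real.sqrt (2*Real.pi) * Real.exp (-(1/4)*x^2) := by
    unfold qpdf
    have h := key1 x
    calc 1 / Real.sqrt (2*Real.pi) * Real.exp (-x^2/2) * (|x|+1)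
        = ((|x|+1) * Real.exp (-x^2/2)) * (1 / Real.sqrt (2*Real.pi)) := by ring
      _ ≤ (3 * Real.exp (-(1/4)*x^2)) * (1 / Real.sqrt (2*Real.pi)) :=
          mul_le_mul_of_nonneg_right h (by positivity)
      _ = 3 / Real.sqrt (2*Real.pi) * Real.exp (-(1/4)*x^2) := by ring
  have hps : ppdf R x * (|x| + 1) ≤
      3 / Real.sqrt (2*Real.pi) * Real.exp (-(1/4)*(x-R)^2)
        + R / Real.sqrt (2*Real.pi) * Real.exp (-(1/2)*(x-R)^2) := by
    unfold ppdf
    have habs : |x| + 1 ≤ (|x - R| + 1) + R := by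
      have h1 : |x| - |R| ≤ |x - R| := abs_sub_abs_le_abs_sub x R
      rw [abs_of_nonneg hR] at h1
      linarith
    have hkey := key1 (x - R)
    have he : Real.exp (-(x-R)^2/2) = Real.exp (-(1/2)*(x-R)^2) := by ring_nf
    have hexp := Real.exp_pos (-(x-R)^2/2)
    calc 1 / Real.sqrt (2*Real.pi) * Real.exp (-(x-R)^2/2) * (|x| + 1)
        ≤ 1 / Real.sqrt (2*Real.pi) * Real.exp (-(x-R)^2/2) * ((|x - R| + 1) + R) := by
          apply mul_le_mul_of_nonneg_left habs; positivity
      _ = ((|x-R|+1) * Real.exp (-(x-R)^2/2)) / Real.sqrt (2*Real.pi)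
            + R / Real.sqrt (2*Real.pi) * Real.exp (-(x-R)^2/2) := by ring
      _ ≤ (3 * Real.exp (-(1/4)*(x-R)^2)) / Real.sqrt (2*Real.pi)
            + R / Real.sqrt (2*Real.pi) * Real.exp (-(x-R)^2/2) := by
          gcongr
      _ = 3 / Real.sqrt (2*Real.pi) * Real.exp (-(1/4)*(x-R)^2)
            + R / Real.sqrt (2*Real.pi) * Real.exp (-(1/2)*(x-R)^2) := by rw [he]; ring
  nlinarith [hq, hps]

lemma grad_bound (R b c : ℝ) (hR : 0 ≤ R) (i : Fin 2) :
    |gradNCE R b c i| ≤ (R + 9) / 2 := by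
  classical
  set H : ℝ → ℝ := fun x =>
    3 / Real.sqrt (2*Real.pi) * (Real.exp (-(1/4)*x^2) + Real.exp (-(1/4)*(x-R)^2))
      + R / Real.sqrt (2*Real.pi) * Real.exp (-(1/2)*(x-R)^2) with hHdef
  have hs : 0 < Real.sqrt (2 * Real.pi) := Real.sqrt_pos.2 (by positivity)
  have hI1 : Integrable (fun x : ℝ => Real.exp (-(1/4) * x^2)) :=
    integrable_exp_neg_mul_sq (by norm_num)
  have hI2 : Integrable (fun x : ℝ => Real.exp (-(1/4) * (x - R)^2)) := hI1.comp_sub_right R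
  have hI3 : Integrable (fun x : ℝ => Real.exp (-(1/2) * (x - R)^2)) :=
    (integrable_exp_neg_mul_sq (show (0:ℝ) < 1/2 by norm_num)).comp_sub_right R
  have hHI : Integrable H := by
    apply Integrable.add
    · exact ((hI1.add hI2).const_mul _)
    · exact hI3.const_mul _
  have hptw : ∀ x : ℝ,
      ‖((pmodel b c x - ppdf R x) / (pmodel b c x / qpdf x + 1)) * ![x, (-1:ℝ)] i‖ ≤ H x := by
    intro x
    have hcore := core_bound R b c x
    have hdens := dens_bound R x hR
    have hnn : 0 ≤ qpdf x + ppdf R x := add_nonneg (qpdf_pos x).le (ppdf_pos R x).le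
    have hT : |![x, (-1:ℝ)] i| ≤ |x| + 1 := by
      fin_cases i <;> simp <;> linarith [abs_nonneg x]
    calc ‖((pmodel b c x - ppdf R x) / (pmodel b c x / qpdf x + 1)) * ![x, (-1:ℝ)] i‖
        = |(pmodel b c x - ppdf R x) / (pmodel b c x / qpdf x + 1)| * |![x, (-1:ℝ)] i| := by
          rw [Real.norm_eq_abs, abs_mul]
      _ ≤ (qpdf x + ppdf R x) * (|x| + 1) :=
          mul_le_mul hcore hT (abs_nonneg _) hnn
      _ ≤ H x := hdens
  have hint_bound : |∫ x : ℝ, ((pmodel b c x - ppdf R x) / (pmodel b c x / qpdf x + 1)) *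
      ![x, (-1:ℝ)] i| ≤ ∫ x, H x := by
    have h1 := norm_integral_le_integral_norm (μ := volume)
      (fun x => ((pmodel b c x - ppdf R x) / (pmodel b c x / qpdf x + 1)) * ![x, (-1:ℝ)] i)
    rw [Real.norm_eq_abs] at h1
    exact le_trans h1 (integral_mono_of_nonneg (Filter.Eventually.of_forall fun x => norm_nonneg _)
      hHI (Filter.Eventually.of_forall hptw))
  have hHval : ∫ x, H x ≤ R + 9 := by
    have e1 : ∫ x : ℝ, Real.exp (-(1/4) * x^2) = Real.sqrt (Real.pi / (1/4)) :=
      integral_gaussian (1/4)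
    have e2 : ∫ x : ℝ, Real.exp (-(1/4) * (x - R)^2) = Real.sqrt (Real.pi / (1/4)) := by
      rw [integral_sub_right_eq_self (fun y => Real.exp (-(1/4) * y^2)) R, e1]
    have e3 : ∫ x : ℝ, Real.exp (-(1/2) * (x - R)^2) = Real.sqrt (Real.pi / (1/2)) := by
      rw [integral_sub_right_eq_self (fun y => Real.exp (-(1/2) * y^2)) R]
      exact integral_gaussian (1/2)
    have hA : Integrable (fun x : ℝ => 3 / Real.sqrt (2*Real.pi) *
        (Real.exp (-(1/4)*x^2) + Real.exp (-(1/4)*(x-R)^2))) := by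
      exact ((hI1.add hI2).const_mul _)
    have hB : Integrable (fun x : ℝ => R / Real.sqrt (2*Real.pi) *
        Real.exp (-(1/2)*(x-R)^2)) := by
      exact (hI3.const_mul _)
    have hsplit : ∫ x, H x =
        3 / Real.sqrt (2*Real.pi) * ((∫ x : ℝ, Real.exp (-(1/4)*x^2))
          + ∫ x : ℝ, Real.exp (-(1/4)*(x-R)^2))
          + R / Real.sqrt (2*Real.pi) * ∫ x : ℝ, Real.exp (-(1/2)*(x-R)^2) := by
      simp only [hHdef]
      rw [integral_add hA hB, integral_const_mul, integral_const_mul, integral_add hI1 hI2]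
    rw [hsplit, e1, e2, e3]
    have h4 : Real.sqrt (Real.pi / (1/4)) = 2 * Real.sqrt Real.pi := by
      rw [show Real.pi / (1/4) = 4 * Real.pi by ring, show (4:ℝ) * Real.pi = 2^2 * Real.pi by ring,
        Real.sqrt_mul (by positivity), Real.sqrt_sq (by norm_num)]
    have h2v : Real.sqrt (Real.pi / (1/2)) = Real.sqrt (2 * Real.pi) := by
      rw [show Real.pi / (1/2) = 2 * Real.pi by ring]
    have hs2 : Real.sqrt (2 * Real.pi) = Real.sqrt 2 * Real.sqrt Real.pi :=
      Real.sqrt_mul (by norm_num) _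
    have hsp : 0 < Real.sqrt Real.pi := Real.sqrt_pos.2 Real.pi_pos
    have hsqrt2 : Real.sqrt 2 ≤ 1.5 := by
      nlinarith [Real.sq_sqrt (show (0:ℝ) ≤ 2 by norm_num), Real.sqrt_nonneg 2]
    have hsqrt2pos : 0 < Real.sqrt 2 := Real.sqrt_pos.2 (by norm_num)
    have hRterm : R / Real.sqrt (2*Real.pi) * Real.sqrt (Real.pi / (1/2)) = R := by
      rw [h2v]; field_simp
    rw [hRterm, h4, hs2]
    have : 3 / (Real.sqrt 2 * Real.sqrt Real.pi) * (2 * Real.sqrt Real.pi + 2 * Real.sqrt Real.pi)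
        = 12 / Real.sqrt 2 := by field_simp; ring
    rw [this]
    have h12 : 12 / Real.sqrt 2 ≤ 9 := by
      rw [div_le_iff₀ hsqrt2pos]
      nlinarith [Real.sq_sqrt (show (0:ℝ) ≤ 2 by norm_num)]
    linarith
  unfold gradNCE
  rw [abs_mul, abs_of_nonneg (show (0:ℝ) ≤ 1/2 by norm_num)]
  linarith [hint_bound, hHval]

/-- In the 1d Gaussian NCE setting, gradient descent with a sufficiently small step size
cannot jump over the annulus: if `‖τ − τ*‖ ≥ 0.2R` and `τ' = τ − η∇L(τ)`, then
`‖τ' − τ*‖ > 0.15R` (for `R` sufficiently large). -/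
theorem nce_gd_cannot_jump_annulus :
    ∃ η0 : ℝ, 0 < η0 ∧ ∃ R0 : ℝ, ∀ R : ℝ, R0 ≤ R → ∀ η : ℝ, 0 < η → η ≤ η0 →
      ∀ b c : ℝ,
        0.2 * R ≤ Real.sqrt ((b - R) ^ 2 + (c - cstar R) ^ 2) →
        0.15 * R < Real.sqrt
          ((b - η * gradNCE R b c 0 - R) ^ 2 +
            (c - η * gradNCE R b c 1 - cstar R) ^ 2) := by
  refine ⟨1/100, by norm_num, 9, fun R hR η hη hη0 b c hfar => ?_⟩
  have hR0 : (0:ℝ) ≤ R := by linarith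
  set g0 := gradNCE R b c 0
  set g1 := gradNCE R b c 1
  have hg0 : |g0| ≤ (R + 9) / 2 := grad_bound R b c hR0 0
  have hg1 : |g1| ≤ (R + 9) / 2 := grad_bound R b c hR0 1
  have htri := sqrt_triangle (b - R) (c - cstar R) (η * g0) (η * g1)
  have heq : (b - R - η * g0) = b - η * g0 - R := by ring
  have heq2 : (c - cstar R - η * g1) = c - η * g1 - cstar R := by ring
  rw [heq, heq2] at htri
  have hsmall : Real.sqrt ((η * g0)^2 + (η * g1)^2) ≤ |η * g0| + |η * g1| := by
    have h1 : (η * g0)^2 + (η * g1)^2 ≤ (|η * g0| + |η * g1|)^2 := by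
      nlinarith [abs_nonneg (η * g0), abs_nonneg (η * g1), sq_abs (η * g0), sq_abs (η * g1)]
    calc Real.sqrt ((η * g0)^2 + (η * g1)^2) ≤ Real.sqrt ((|η * g0| + |η * g1|)^2) :=
          Real.sqrt_le_sqrt h1
      _ = |η * g0| + |η * g1| := Real.sqrt_sq (by positivity)
  have habs0 : |η * g0| ≤ η * ((R + 9)/2) := by
    rw [abs_mul, abs_of_pos hη]; exact mul_le_mul_of_nonneg_left hg0 hη.le
  have habs1 : |η * g1| ≤ η * ((R + 9)/2) := by
    rw [abs_mul, abs_of_pos hη]; exact mul_le_mul_of_nonneg_left hg1 hη.le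
  have hstep : η * (R + 9) ≤ (R + 9) / 100 := by
    have : 0 ≤ R + 9 := by linarith
    nlinarith
  have hR9 : (R + 9) / 100 ≤ 0.02 * R := by linarith
  linarith [htri, hsmall, habs0, habs1, hfar]
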